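/- With the notation of the ℕ²-case: let τ¹ be the 𝕋-action on O(ℰY_2) induced by the correspondence automorphisms (γ_z, 1_{Y_2} ⊗ γ_z) of ℰY_2, and τ² the 𝕋-action induced by the automorphisms (1_{O_{Y_1}}, β_z) where β_z(y ⊗ S) = z(y ⊗ S). Then ρ_{(z,w)} := τ²_w τ¹_z defines a strongly continuous action ρ of 𝕋² on O(ℰY_2) (the actions τ¹ and τ² commute) satisfying ρ_{(z,w)}(σ_1(y_1)) = z σ_1(y_1) and ρ_{(z,w)}(σ_2(y_2)) = w σ_2(y_2) for y_1 ∈ Y_1, y_2 ∈ Y_2; hence ρ is compatible with the gauge action of 𝕋² on O_X under the representation ψ. -/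

import Mathlib

/- ############################################################
   Common framework: C*-correspondences, interior tensor products
   (characterized relationally), representations, Cuntz–Pimsner algebras,
   product systems over ℕ^k, generating systems, and the ℰ / ℛθ
   constructions of the paper (characterized relationally).
   ############################################################ -/

noncomputable section

open Filter Topology

universe u

/-- A C*-correspondence over a (not necessarily unital) C*-algebra `A`:
a right Hilbert `A`-module `X` together with a left action of `A` by
adjointable (bounded) operators.  The rank-one operators `θ_{x,y}` are
bundled as data together with their defining property. -/
structure Corr (A : Type u) [NonUnitalCStarAlgebra A] : Type (u + 1) where
  X : Type u
  [nacg : NormedAddCommGroup X]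
  [nsp : NormedSpace ℂ X]
  [cmpl : CompleteSpace X]
  /-- right action of `A` -/
  ract : X → A → X
  /-- `A`-valued inner product -/
  inner : X → X → A
  /-- left action `φ : A → L(X)` by adjointable operators -/
  lactL : A → X →L[ℂ] X
  /-- the rank-one ("compact") operators `θ_{x,y} z = x ⬝ ⟨y, z⟩` -/
  rankOne : X → X → X →L[ℂ] X
  ract_add_left : ∀ x y a, ract (x + y) a = ract x a + ract y a
  ract_add_right : ∀ x a b, ract x (a + b) = ract x a + ract x b
  ract_mul : ∀ x a b, ract x (a * b) = ract (ract x a) b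
  ract_smul : ∀ (c : ℂ) x a, ract (c • x) a = c • ract x a
  ract_smul' : ∀ (c : ℂ) x a, ract x (c • a) = c • ract x a
  inner_add_right : ∀ x y z, inner x (y + z) = inner x y + inner x z
  inner_smul_right : ∀ (c : ℂ) x y, inner x (c • y) = c • inner x y
  inner_star : ∀ x y, star (inner x y) = inner y x
  inner_ract_right : ∀ x y a, inner x (ract y a) = inner x y * a
  norm_eq : ∀ x, ‖x‖ ^ 2 = ‖inner x x‖
  lact_add : ∀ a b, lactL (a + b) = lactL a + lactL b
  lact_mul : ∀ a b, lactL (a * b) = (lactL a).comp (lactL b)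
  lact_smul : ∀ (c : ℂ) a, lactL (c • a) = c • lactL a
  lact_adjoint : ∀ a x y, inner (lactL a x) y = inner x (lactL (star a) y)
  rankOne_apply : ∀ x y z, rankOne x y z = ract x (inner y z)

attribute [instance] Corr.nacg Corr.nsp Corr.cmpl

variable {A : Type u} [NonUnitalCStarAlgebra A]

/-- Nondegeneracy: `A·X` is (topologically) all of `X`. -/
def Corr.Nondeg (W : Corr A) : Prop :=
  closure (Submodule.span ℂ {y : W.X | ∃ a x, y = W.lactL a x} : Set W.X) = Set.univ

/-- Regularity: the left action is injective and takes values in the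
compact operators (the closed span of the rank-one operators). -/
def Corr.Regular (W : Corr A) : Prop :=
  (∀ a, W.lactL a = 0 → a = 0) ∧
    ∀ a, W.lactL a ∈
      closure (Submodule.span ℂ {T : W.X →L[ℂ] W.X | ∃ x y, T = W.rankOne x y} :
        Set (W.X →L[ℂ] W.X))

/-- standing hypotheses of the paper: nondegenerate and regular -/
def Corr.Reg (W : Corr A) : Prop := W.Nondeg ∧ W.Regular

/-- a bare function which is a continuous `ℂ`-linear map -/
structure IsCLMap {E F : Type u} [NormedAddCommGroup E] [NormedSpace ℂ E]
    [NormedAddCommGroup F] [NormedSpace ℂ F] (f : E → F) : Prop where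
  map_add : ∀ x y, f (x + y) = f x + f y
  map_smul : ∀ (c : ℂ) x, f (c • x) = c • f x
  cont : Continuous f

/-- a map of correspondences over the same algebra which is an isomorphism -/
structure IsCorrIsoFun (W Z : Corr A) (f : W.X → Z.X) : Prop where
  bijective : Function.Bijective f
  map_add : ∀ x y, f (x + y) = f x + f y
  map_smul : ∀ (c : ℂ) x, f (c • x) = c • f x
  map_inner : ∀ x y, Z.inner (f x) (f y) = W.inner x y
  map_ract : ∀ x a, f (W.ract x a) = Z.ract (f x) a
  map_lact : ∀ a x, f (W.lactL a x) = Z.lactL a (f x)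

/-- an isomorphism of correspondences over the same algebra (bundled) -/
structure CorrIso (W Z : Corr A) : Type u where
  toFun : W.X → Z.X
  invFun : Z.X → W.X
  left_inv : ∀ x, invFun (toFun x) = x
  right_inv : ∀ y, toFun (invFun y) = y
  map_add : ∀ x y, toFun (x + y) = toFun x + toFun y
  map_smul : ∀ (c : ℂ) x, toFun (c • x) = c • toFun x
  map_inner : ∀ x y, Z.inner (toFun x) (toFun y) = W.inner x y
  map_ract : ∀ x a, toFun (W.ract x a) = Z.ract (toFun x) a
  map_lact : ∀ a x, toFun (W.lactL a x) = Z.lactL a (toFun x)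

/-- an isomorphism of correspondences lying over an isomorphism `Φ` of the
coefficient algebras -/
structure CorrIsoOver {B : Type u} [NonUnitalCStarAlgebra B]
    (Φ : A → B) (W : Corr A) (Z : Corr B) : Type u where
  toFun : W.X → Z.X
  bijective : Function.Bijective toFun
  map_add : ∀ x y, toFun (x + y) = toFun x + toFun y
  map_smul : ∀ (c : ℂ) x, toFun (c • x) = c • toFun x
  map_inner : ∀ x y, Z.inner (toFun x) (toFun y) = Φ (W.inner x y)
  map_ract : ∀ x a, toFun (W.ract x a) = Z.ract (toFun x) (Φ a)
  map_lact : ∀ a x, toFun (W.lactL a x) = Z.lactL (Φ a) (toFun x)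

/-- `T`, together with the bilinear map `m`, is a realization of the
balanced (interior) tensor product `W ⊗_A V` of correspondences over `A`. -/
structure IsTensor (W V T : Corr A) (m : W.X → V.X → T.X) : Prop where
  add_left : ∀ x x' y, m (x + x') y = m x y + m x' y
  add_right : ∀ x y y', m x (y + y') = m x y + m x y'
  smul_left : ∀ (c : ℂ) x y, m (c • x) y = c • m x y
  smul_right : ∀ (c : ℂ) x y, m x (c • y) = c • m x y
  balanced : ∀ x a y, m (W.ract x a) y = m x (V.lactL a y)
  inner : ∀ x y x' y',
    T.inner (m x y) (m x' y') = V.inner y (V.lactL (W.inner x x') y')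
  ract : ∀ x y a, T.ract (m x y) a = m x (V.ract y a)
  lact : ∀ a x y, T.lactL a (m x y) = m (W.lactL a x) y
  dense : closure (Submodule.span ℂ {z : T.X | ∃ x y, z = m x y} : Set T.X) = Set.univ

variable {B : Type u} [NonUnitalCStarAlgebra B]

/-- `π : A → B` is a *-homomorphism (stated elementwise) -/
structure IsStarHom (π : A → B) : Prop where
  map_add : ∀ a b, π (a + b) = π a + π b
  map_mul : ∀ a b, π (a * b) = π a * π b
  map_star : ∀ a, π (star a) = star (π a)
  map_smul : ∀ (c : ℂ) a, π (c • a) = c • π a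

/-- `(π, t)` is a representation (Toeplitz representation) of the
correspondence `W` in the C*-algebra `B`. -/
structure IsRep (W : Corr A) (π : A → B) (t : W.X → B) : Prop where
  hom : IsStarHom π
  t_add : ∀ x y, t (x + y) = t x + t y
  t_smul : ∀ (c : ℂ) x, t (c • x) = c • t x
  lact : ∀ a x, t (W.lactL a x) = π a * t x
  ract : ∀ x a, t (W.ract x a) = t x * π a
  inner : ∀ x y, star (t x) * t y = π (W.inner x y)

/-- Cuntz–Pimsner covariance of a representation of a *regular*
correspondence: whenever `φ(a)` is approximated in norm by finite sums of
rank-one operators `θ_{x,y}`, `π(a)` is approximated by the corresponding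
sums `t(x) t(y)*`.  (For regular correspondences this is equivalent to
`π = t⁽¹⁾ ∘ φ`.) -/
def CPCov (W : Corr A) (π : A → B) (t : W.X → B) : Prop :=
  ∀ (a : A) (N : ℕ → ℕ) (x y : ∀ n, Fin (N n) → W.X),
    Tendsto (fun n => ∑ r, W.rankOne (x n r) (y n r)) atTop (𝓝 (W.lactL a)) →
    Tendsto (fun n => ∑ r, t (x n r) * star (t (y n r))) atTop (𝓝 (π a))

/-- The Cuntz–Pimsner algebra of a correspondence `W`: a C*-algebra `O`
together with a universal covariant representation `(π, t)`:  `(π,t)` is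
covariant, `π` is injective, `O` is generated by the images of `π` and `t`,
and every covariant representation factors uniquely through `O`. -/
structure CPAlg (W : Corr A) : Type (u + 1) where
  O : Type u
  [alg : NonUnitalCStarAlgebra O]
  π : A → O
  t : W.X → O
  isRep : IsRep W π t
  covariant : CPCov W π t
  inj : Function.Injective π
  gen : ∀ S : Set O, IsClosed S →
    (∀ a, π a ∈ S) → (∀ x, t x ∈ S) →
    (∀ p q, p ∈ S → q ∈ S → p + q ∈ S) →
    (∀ p q, p ∈ S → q ∈ S → p * q ∈ S) →
    (∀ (c : ℂ) p, p ∈ S → c • p ∈ S) →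
    (∀ p, p ∈ S → star p ∈ S) → ∀ z, z ∈ S
  universal : ∀ (C : Type u) [NonUnitalCStarAlgebra C],
    ∀ (π' : A → C) (t' : W.X → C), IsRep W π' t' → CPCov W π' t' →
      ∃! h : O →⋆ₙₐ[ℂ] C, (∀ a, h (π a) = π' a) ∧ ∀ x, h (t x) = t' x

attribute [instance] CPAlg.alg

/- ##################  product systems over ℕ^k  ################## -/

/-- the `i`-th standard generator of `ℕ^k` -/
def egen {k : ℕ} (i : Fin k) : Fin k → ℕ := Pi.single i 1

/-- A product system over `ℕ^k` of (nondegenerate regular) correspondences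
over `A`:  fibers `fib s`, an associative multiplication implementing
isomorphisms `fib s ⊗_A fib t ≅ fib (s+t)`, and `fib 0 = A` (witnessed by
the unit map). -/
structure PSys (A : Type u) [NonUnitalCStarAlgebra A] (k : ℕ) : Type (u + 1) where
  fib : (Fin k → ℕ) → Corr A
  reg : ∀ s, (fib s).Reg
  mul : ∀ s t, (fib s).X → (fib t).X → (fib (s + t)).X
  isTensor : ∀ s t, IsTensor (fib s) (fib t) (fib (s + t)) (mul s t)
  assoc : ∀ s t u x y z,
    HEq (mul (s + t) u (mul s t x y) z) (mul s (t + u) x (mul t u y z))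
  unit : A → (fib 0).X
  unit_bij : Function.Bijective unit
  unit_add : ∀ a b, unit (a + b) = unit a + unit b
  unit_smul : ∀ (c : ℂ) a, unit (c • a) = c • unit a
  unit_inner : ∀ a b, (fib 0).inner (unit a) (unit b) = star a * b
  unit_lact : ∀ a b, (fib 0).lactL a (unit b) = unit (a * b)
  unit_ract : ∀ a b, (fib 0).ract (unit a) b = unit (a * b)
  unit_mul_left : ∀ s a x, HEq (mul 0 s (unit a) x) ((fib s).lactL a x)
  unit_mul_right : ∀ s x a, HEq (mul s 0 x (unit a)) ((fib s).ract x a)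

/-- a representation of a product system in a C*-algebra `B` -/
structure PSRep {k : ℕ} (Xs : PSys A k) (B : Type u) [NonUnitalCStarAlgebra B] :
    Type u where
  π : A → B
  ψ : ∀ s, (Xs.fib s).X → B
  isRep : ∀ s, IsRep (Xs.fib s) π (ψ s)
  ψ_zero : ∀ a, ψ 0 (Xs.unit a) = π a
  mul : ∀ s t x y, ψ s x * ψ t y = ψ (s + t) (Xs.mul s t x y)

/-- Cuntz–Pimsner covariance of a representation of a product system -/
def PSCPCov {k : ℕ} {Xs : PSys A k} {B : Type u} [NonUnitalCStarAlgebra B]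
    (r : PSRep Xs B) : Prop :=
  ∀ s, CPCov (Xs.fib s) r.π (r.ψ s)

/-- The Cuntz–Pimsner algebra `𝒪(X)` of a product system. -/
structure PSCPAlg {k : ℕ} (Xs : PSys A k) : Type (u + 1) where
  O : Type u
  [alg : NonUnitalCStarAlgebra O]
  rep : PSRep Xs O
  covariant : PSCPCov rep
  inj : Function.Injective rep.π
  gen : ∀ S : Set O, IsClosed S →
    (∀ a, rep.π a ∈ S) → (∀ s x, rep.ψ s x ∈ S) →
    (∀ p q, p ∈ S → q ∈ S → p + q ∈ S) →
    (∀ p q, p ∈ S → q ∈ S → p * q ∈ S) →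
    (∀ (c : ℂ) p, p ∈ S → c • p ∈ S) →
    (∀ p, p ∈ S → star p ∈ S) → ∀ z, z ∈ S
  universal : ∀ (C : Type u) [NonUnitalCStarAlgebra C],
    ∀ r : PSRep Xs C, PSCPCov r →
      ∃! h : O →⋆ₙₐ[ℂ] C,
        (∀ a, h (rep.π a) = r.π a) ∧ ∀ s x, h (rep.ψ s x) = r.ψ s x

attribute [instance] PSCPAlg.alg

/- ##################  generating systems  ################## -/

/-- a realization of a triple tensor product `W1 ⊗ W2 ⊗ W3` carrying both
a left pairing `(W1 ⊗ W2) ⊗ W3` and a right pairing `W1 ⊗ (W2 ⊗ W3)` -/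
structure Trip (W1 W2 W3 : Corr A) (T12 : Corr A) (m12 : W1.X → W2.X → T12.X)
    (T23 : Corr A) (m23 : W2.X → W3.X → T23.X) (P : Corr A) : Type u where
  lp : T12.X → W3.X → P.X
  rp : W1.X → T23.X → P.X
  lt : IsTensor T12 W3 P lp
  rt : IsTensor W1 T23 P rp
  compat : ∀ x y z, lp (m12 x y) z = rp x (m23 y z)

/-- the hexagonal relation for a triple of flip isomorphisms
`θij, θil, θjl`, stated relative to arbitrary realizations of the six
triple tensor products. -/
def HexProp (Yi Yj Yl : Corr A)
    (Tij Tji Til Tli Tjl Tlj : Corr A)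
    (mij : Yi.X → Yj.X → Tij.X) (mji : Yj.X → Yi.X → Tji.X)
    (mil : Yi.X → Yl.X → Til.X) (mli : Yl.X → Yi.X → Tli.X)
    (mjl : Yj.X → Yl.X → Tjl.X) (mlj : Yl.X → Yj.X → Tlj.X)
    (θij : Tij.X → Tji.X) (θil : Til.X → Tli.X) (θjl : Tjl.X → Tlj.X) : Prop :=
  ∀ (P1 P2 P3 P4 P5 P6 : Corr A)
    (R1 : Trip Yi Yj Yl Tij mij Tjl mjl P1)
    (R2 : Trip Yj Yi Yl Tji mji Til mil P2)
    (R3 : Trip Yj Yl Yi Tjl mjl Tli mli P3)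
    (R4 : Trip Yl Yj Yi Tlj mlj Tji mji P4)
    (R5 : Trip Yi Yl Yj Til mil Tlj mlj P5)
    (R6 : Trip Yl Yi Yj Tli mli Tij mij P6)
    (F1 : P1.X → P2.X) (F2 : P2.X → P3.X) (F3 : P3.X → P4.X)
    (F4 : P1.X → P5.X) (F5 : P5.X → P6.X) (F6 : P6.X → P4.X),
    IsCLMap F1 → IsCLMap F2 → IsCLMap F3 →
    IsCLMap F4 → IsCLMap F5 → IsCLMap F6 →
    (∀ u z, F1 (R1.lp u z) = R2.lp (θij u) z) →
    (∀ y v, F2 (R2.rp y v) = R3.rp y (θil v)) →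
    (∀ u z, F3 (R3.lp u z) = R4.lp (θjl u) z) →
    (∀ x v, F4 (R1.rp x v) = R5.rp x (θjl v)) →
    (∀ u z, F5 (R5.lp u z) = R6.lp (θil u) z) →
    (∀ x v, F6 (R6.rp x v) = R4.rp x (θij v)) →
    ∀ w, F3 (F2 (F1 w)) = F6 (F5 (F4 w))

/-- A generating system `(Y, θ)` of `k` correspondences over `A`:
correspondences `Y i`, chosen realizations `T i j` of the tensor products
`Y i ⊗_A Y j`, and flip isomorphisms `θ i j : Y i ⊗ Y j → Y j ⊗ Y i` with
`θ i i = id`, `θ j i = (θ i j)⁻¹`, satisfying the hexagonal relations. -/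
structure GenSys (A : Type u) [NonUnitalCStarAlgebra A] (k : ℕ) : Type (u + 1) where
  Y : Fin k → Corr A
  reg : ∀ i, (Y i).Reg
  T : Fin k → Fin k → Corr A
  tmul : ∀ i j, (Y i).X → (Y j).X → (T i j).X
  isTensor : ∀ i j, IsTensor (Y i) (Y j) (T i j) (tmul i j)
  θ : ∀ i j, CorrIso (T i j) (T j i)
  θ_diag : ∀ i x y, (θ i i).toFun (tmul i i x y) = tmul i i x y
  θ_symm : ∀ i j z, (θ j i).toFun ((θ i j).toFun z) = z
  hex : ∀ i j l, HexProp (Y i) (Y j) (Y l) (T i j) (T j i) (T i l) (T l i)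
    (T j l) (T l j) (tmul i j) (tmul j i) (tmul i l) (tmul l i) (tmul j l)
    (tmul l j) ((θ i j).toFun) ((θ i l).toFun) ((θ j l).toFun)

/-- the generating system obtained by keeping only `Y 1, …, Y m` -/
def GenSys.restrict {k : ℕ} (G : GenSys A k) (m : ℕ) (h : m ≤ k) : GenSys A m where
  Y i := G.Y (Fin.castLE h i)
  reg i := G.reg _
  T i j := G.T (Fin.castLE h i) (Fin.castLE h j)
  tmul i j := G.tmul _ _
  isTensor i j := G.isTensor _ _
  θ i j := G.θ _ _
  θ_diag i := G.θ_diag _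
  θ_symm i j := G.θ_symm _ _
  hex i j l := G.hex _ _ _

/-- `X` is *the* product system (over `ℕ^k`) generated by the generating
system `G` (Fowler–Sims); witnessed by compatible isomorphisms on the
generating fibers. -/
structure Generates {k : ℕ} (G : GenSys A k) (Xs : PSys A k) : Type u where
  ι : ∀ i, CorrIso (G.Y i) (Xs.fib (egen i))
  κ : ∀ i j, CorrIso (G.T i j) (Xs.fib (egen i + egen j))
  κ_mul : ∀ i j x y,
    (κ i j).toFun (G.tmul i j x y) =
      Xs.mul (egen i) (egen j) ((ι i).toFun x) ((ι j).toFun y)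
  θ_compat : ∀ i j z,
    HEq ((κ j i).toFun ((G.θ i j).toFun z)) ((κ i j).toFun z)

/- ############  mixed tensor products `W ⊗_A O` and `W ⊗_A V`  ############ -/

/-- `Z` (a correspondence over the C*-algebra `O`), with map `m`, is a
realization of the right Hilbert `O`-module `W ⊗_A O`, where `O` is an
`A`-algebra via `πA`.  (No condition on the left action of `O` on `Z`.) -/
structure MixedMod (W : Corr A) (O : Type u) [NonUnitalCStarAlgebra O]
    (πA : A → O) (Z : Corr O) (m : W.X → O → Z.X) : Prop where
  add_left : ∀ x x' S, m (x + x') S = m x S + m x' S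
  add_right : ∀ x S S', m x (S + S') = m x S + m x S'
  smul_left : ∀ (c : ℂ) x S, m (c • x) S = c • m x S
  smul_right : ∀ (c : ℂ) x S, m x (c • S) = c • m x S
  balanced : ∀ x a S, m (W.ract x a) S = m x (πA a * S)
  ract : ∀ x S T, Z.ract (m x S) T = m x (S * T)
  inner : ∀ x S y T, Z.inner (m x S) (m y T) = star S * (πA (W.inner x y) * T)
  dense : closure (Submodule.span ℂ {z : Z.X | ∃ x S, z = m x S} : Set Z.X) = Set.univ

/-- `P`, with pairing `p`, is a realization of the balanced tensor product
`W ⊗_A V` where `W` is a correspondence over `A` and `V` a correspondence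
over the `A`-algebra `O` (via `πA`); the left `A`-action is `πA`-compatible. -/
structure MixedPair (W : Corr A) {O : Type u} [NonUnitalCStarAlgebra O]
    (πA : A → O) (V P : Corr O) (p : W.X → V.X → P.X) : Prop where
  add_left : ∀ x x' v, p (x + x') v = p x v + p x' v
  add_right : ∀ x v v', p x (v + v') = p x v + p x v'
  smul_left : ∀ (c : ℂ) x v, p (c • x) v = c • p x v
  smul_right : ∀ (c : ℂ) x v, p x (c • v) = c • p x v
  balanced : ∀ x a v, p (W.ract x a) v = p x (V.lactL (πA a) v)
  inner : ∀ x v x' v',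
    P.inner (p x v) (p x' v') = V.inner v (V.lactL (πA (W.inner x x')) v')
  ract : ∀ x v S, P.ract (p x v) S = p x (V.ract v S)
  lact_pi : ∀ a x v, P.lactL (πA a) (p x v) = p (W.lactL a x) v
  dense : closure (Submodule.span ℂ {z : P.X | ∃ x v, z = p x v} : Set P.X) = Set.univ

/- ############  the correspondence `ℰYᵢ = Yᵢ ⊗_A 𝒪(Y₁)`  ############ -/

/-- `Z = Yi ⊗_A 𝒪(Y1)` with the left `𝒪(Y1)`-action determined by the flip
`θ : Y1 ⊗ Yi → Yi ⊗ Y1` (`T` and `T'` are realizations of these tensor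
products):  `π(a)` acts by `φ(a) ⊗ 1`, and `t(x)·(y ⊗ S) = (1 ⊗ V)(θ ⊗ 1)
(x ⊗ y ⊗ S)`. -/
structure ECorrData (Y1 Yi : Corr A)
    (T : Corr A) (mT : Y1.X → Yi.X → T.X)
    (T' : Corr A) (mT' : Yi.X → Y1.X → T'.X)
    (θ : T.X → T'.X)
    (C : CPAlg Y1) (Z : Corr C.O) (m : Yi.X → C.O → Z.X) : Prop where
  mod : MixedMod Yi C.O C.π Z m
  lact_pi : ∀ a y S, Z.lactL (C.π a) (m y S) = m (Yi.lactL a y) S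
  lact_t : ∃ μ : T'.X → C.O → Z.X,
    (∀ S, IsCLMap fun u => μ u S) ∧
    (∀ y u S, μ (mT' y u) S = m y (C.t u * S)) ∧
    ∀ x y S, Z.lactL (C.t x) (m y S) = μ (θ (mT x y)) S

/-- `Z = Yi ⊗_A 𝒪(Y p)` for a generating system `G`, with left action
determined by `θ p i` -/
def ECorr {k : ℕ} (G : GenSys A k) (p i : Fin k) (C : CPAlg (G.Y p))
    (Z : Corr C.O) (m : (G.Y i).X → C.O → Z.X) : Prop :=
  ECorrData (G.Y p) (G.Y i) (G.T p i) (G.tmul p i) (G.T i p) (G.tmul i p)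
    ((G.θ p i).toFun) C Z m

/-- `Z = Y j ⊗_A 𝒪(Y 1 ∗ ⋯ ∗ Y m)` with the left action of the
Cuntz–Pimsner algebra of the product system determined on the generators
`σ i = ψ_{e i}` via the flips `θ i j` and the absorption maps. -/
structure EPCorr {k : ℕ} (G : GenSys A k) {m : ℕ} (hm : m ≤ k)
    (Xs : PSys A m) (gen : Generates (G.restrict m hm) Xs) (C : PSCPAlg Xs)
    (j : Fin k) (Z : Corr C.O) (mm : (G.Y j).X → C.O → Z.X) : Prop where
  mod : MixedMod (G.Y j) C.O C.rep.π Z mm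
  lact_pi : ∀ a y S, Z.lactL (C.rep.π a) (mm y S) = mm ((G.Y j).lactL a y) S
  lact_t : ∀ i : Fin m,
    ∃ μ : (G.T j (Fin.castLE hm i)).X → C.O → Z.X,
      (∀ S, IsCLMap fun u => μ u S) ∧
      (∀ y u S, μ (G.tmul j (Fin.castLE hm i) y u) S =
        mm y (C.rep.ψ (egen i) ((gen.ι i).toFun u) * S)) ∧
      ∀ x y S, Z.lactL (C.rep.ψ (egen i) ((gen.ι i).toFun x)) (mm y S) =
        μ ((G.θ (Fin.castLE hm i) j).toFun (G.tmul (Fin.castLE hm i) j x y)) S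

/- ############  the isomorphism `ℛθ = ν⁻¹ (θ ⊗ 1) ν`  ############ -/

/-- Witness data expressing that `R : Zi ⊗_O Zj → Zj ⊗_O Zi` is the map
`ℛθ_{ij} = ν_{ji}⁻¹ (θ_{ij} ⊗ 1_O) ν_{ij}` of the paper, where
`Zi = Yi ⊗_A O`, `O = 𝒪(Y1)`, and `ν_{ij} : (Yi ⊗ O) ⊗_O (Yj ⊗ O) ≅
Yi ⊗ Yj ⊗ O` is the canonical absorption isomorphism. -/
structure RTheta (O : Type u) [NonUnitalCStarAlgebra O] (πA : A → O)
    (Yi Yj : Corr A) (Tij Tji : Corr A)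
    (mij : Yi.X → Yj.X → Tij.X) (mji : Yj.X → Yi.X → Tji.X)
    (θij : Tij.X → Tji.X)
    (Zi Zj : Corr O) (mmi : Yi.X → O → Zi.X) (mmj : Yj.X → O → Zj.X)
    (TZ TZr : Corr O) (mZ : Zi.X → Zj.X → TZ.X) (mZr : Zj.X → Zi.X → TZr.X)
    (R : TZ.X → TZr.X) : Type (u + 1) where
  Pl : Corr O
  Pr : Corr O
  pij : Yi.X → Zj.X → Pl.X
  pji : Yj.X → Zi.X → Pr.X
  hp : MixedPair Yi πA Zj Pl pij
  hpr : MixedPair Yj πA Zi Pr pji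
  q : Tij.X → O → Pl.X
  qr : Tji.X → O → Pr.X
  hq : MixedMod Tij O πA Pl q
  hqr : MixedMod Tji O πA Pr qr
  q_compat : ∀ x y S, q (mij x y) S = pij x (mmj y S)
  q_compatr : ∀ y x S, qr (mji y x) S = pji y (mmi x S)
  ν : TZ.X → Pl.X
  νr : TZr.X → Pr.X
  hν : IsCLMap ν ∧ Function.Bijective ν ∧
    ∀ x S ζ, ν (mZ (mmi x S) ζ) = pij x (Zj.lactL S ζ)
  hνr : IsCLMap νr ∧ Function.Bijective νr ∧
    ∀ y S ζ, νr (mZr (mmj y S) ζ) = pji y (Zi.lactL S ζ)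
  Θ : Pl.X → Pr.X
  hΘ : IsCLMap Θ ∧ ∀ u S, Θ (q u S) = qr (θij u) S
  hR : ∀ z, νr (R z) = Θ (ν z)

/-- the gauge action of `𝕋` on the Cuntz–Pimsner algebra of a correspondence -/
def IsGaugeAut {A : Type u} [NonUnitalCStarAlgebra A] {W : Corr A}
    (C : CPAlg W) (γ : ℂ → C.O → C.O) : Prop :=
  ∀ z : ℂ, ‖z‖ = 1 →
    IsStarHom (γ z) ∧ Function.Bijective (γ z) ∧
      (∀ x, γ z (C.t x) = z • C.t x) ∧ ∀ a, γ z (C.π a) = C.π a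

/- ################# auxiliary lemmas for the proof ################# -/

section AuxHelpers

lemma aux_sq_le_imp {x c : ℝ} (hx : 0 ≤ x) (hc : 0 ≤ c) (h : x ^ 2 ≤ c ^ 2) : x ≤ c := by
  nlinarith

/-- left approximate unit for a single selfadjoint element -/
lemma exists_left_approx {O : Type u} [NonUnitalCStarAlgebra O] (b : O) (hb : IsSelfAdjoint b) :
    ∃ e : ℕ → O, (∀ n, ‖e n‖ ≤ 1) ∧ ∀ n, ‖b * e n - b‖ ≤ Real.sqrt (((n : ℝ) + 1)⁻¹) := by
  set ε : ℕ → ℝ := fun n => ((n : ℝ) + 1)⁻¹ with hε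
  have hεpos : ∀ n, 0 < ε n := fun n => by positivity
  set f : ℕ → ℝ → ℝ := fun n t => t ^ 2 / (ε n + t ^ 2) with hf
  have hden : ∀ n t, 0 < ε n + t ^ 2 := fun n t => by positivity
  have hfcont : ∀ n, ContinuousOn (f n) (quasispectrum ℝ b) := fun n =>
    (Continuous.div (continuous_pow 2) (continuous_const.add (continuous_pow 2))
      (fun t => (hden n t).ne')).continuousOn
  have hf0 : ∀ n, f n 0 = 0 := fun n => by simp [hf]
  refine ⟨fun n => cfcₙ (f n) b, fun n => ?_, fun n => ?_⟩
  · refine norm_cfcₙ_le fun t _ => ?_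
    rw [Real.norm_eq_abs, hf, abs_div, abs_of_pos (hden n t), abs_of_nonneg (sq_nonneg t)]
    rw [div_le_one (hden n t)]
    linarith [(hεpos n).le]
  · have hmulc : ContinuousOn (fun t : ℝ => t * f n t) (quasispectrum ℝ b) :=
      continuousOn_id.mul (hfcont n)
    have h1 : cfcₙ (fun t : ℝ => t * f n t) b = b * cfcₙ (f n) b := by
      have := cfcₙ_mul (fun t : ℝ => t) (f n) b continuousOn_id (by simp) (hfcont n) (hf0 n)
      rw [cfcₙ_id' ℝ b hb] at this
      simpa using this
    have h2 : cfcₙ (fun t : ℝ => t * f n t - t) b = cfcₙ (fun t : ℝ => t * f n t) b - b := by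
      have := cfcₙ_sub (fun t : ℝ => t * f n t) (fun t : ℝ => t) b hmulc
        (by simp [hf]) continuousOn_id (by simp)
      rw [cfcₙ_id' ℝ b hb] at this
      simpa using this
    show ‖b * cfcₙ (f n) b - b‖ ≤ _
    rw [← h1, ← h2]
    refine norm_cfcₙ_le fun t _ => ?_
    have key : t * f n t - t = -(t * ε n / (ε n + t ^ 2)) := by
      have hfn : f n t = t ^ 2 / (ε n + t ^ 2) := rfl
      rw [hfn]
      have := hden n t
      field_simp
      ring
    rw [Real.norm_eq_abs, key, abs_neg, abs_div, abs_of_pos (hden n t)]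
    rw [div_le_iff₀ (hden n t)]
    have h3 := Real.sq_sqrt (hεpos n).le
    have h4 := Real.sqrt_nonneg (ε n)
    have h5 : 0 ≤ (Real.sqrt (ε n) - |t|) ^ 2 := sq_nonneg _
    have h6 : |t * ε n| = |t| * ε n := by rw [abs_mul, abs_of_pos (hεpos n)]
    rw [h6]
    nlinarith [abs_nonneg t, sq_abs t]

variable {O1 O2 O3 : Type u} [NonUnitalCStarAlgebra O1] [NonUnitalCStarAlgebra O2]
  [NonUnitalCStarAlgebra O3]

lemma IsStarHom.map_zero {f : O1 → O2} (hf : IsStarHom f) : f 0 = 0 := by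
  have h := hf.map_add 0 0
  rw [add_zero] at h
  exact (left_eq_add.mp h)

/-- bundle an `IsStarHom` into a `NonUnitalStarAlgHom` -/
def IsStarHom.bundle {f : O1 → O2} (hf : IsStarHom f) : O1 →⋆ₙₐ[ℂ] O2 where
  toFun := f
  map_smul' := hf.map_smul
  map_zero' := hf.map_zero
  map_add' := hf.map_add
  map_mul' := hf.map_mul
  map_star' := hf.map_star

lemma IsStarHom.norm_le {f : O1 → O2} (hf : IsStarHom f) (x : O1) : ‖f x‖ ≤ ‖x‖ :=
  NonUnitalStarAlgHom.norm_apply_le hf.bundle x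

lemma IsStarHom.map_sub {f : O1 → O2} (hf : IsStarHom f) (x y : O1) : f (x - y) = f x - f y :=
  _root_.map_sub hf.bundle x y

lemma IsStarHom.norm_sub_le {f : O1 → O2} (hf : IsStarHom f) (x y : O1) :
    ‖f x - f y‖ ≤ ‖x - y‖ := by
  rw [← hf.map_sub]; exact hf.norm_le _

lemma IsStarHom.continuous {f : O1 → O2} (hf : IsStarHom f) : Continuous f := by
  have : LipschitzWith 1 f := LipschitzWith.of_dist_le_mul fun x y => by
    rw [dist_eq_norm, dist_eq_norm, NNReal.coe_one, one_mul]; exact hf.norm_sub_le x y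
  exact this.continuous

lemma IsStarHom.compHom {f : O1 → O2} {g : O2 → O3} (hg : IsStarHom g) (hf : IsStarHom f) :
    IsStarHom (fun x => g (f x)) where
  map_add a b := by rw [hf.map_add, hg.map_add]
  map_mul a b := by rw [hf.map_mul, hg.map_mul]
  map_star a := by rw [hf.map_star, hg.map_star]
  map_smul c a := by rw [hf.map_smul, hg.map_smul]

section LinHelpers

variable {E F : Type*} [NormedAddCommGroup E] [NormedSpace ℂ E]
  [NormedAddCommGroup F] [NormedSpace ℂ F]

lemma map_zero_of_addsmul {f : E → F} (hsmul : ∀ (c : ℂ) x, f (c • x) = c • f x) : f 0 = 0 := by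
  simpa using hsmul 0 0

lemma map_sub_of_addsmul {f : E → F} (hadd : ∀ x y, f (x + y) = f x + f y)
    (hsmul : ∀ (c : ℂ) x, f (c • x) = c • f x) (x y : E) : f (x - y) = f x - f y := by
  have hneg : ∀ v, f (-v) = -f v := fun v => by
    have h := hsmul (-1) v
    rw [neg_one_smul, neg_one_smul] at h
    exact h
  rw [sub_eq_add_neg, hadd, hneg, sub_eq_add_neg]

lemma continuous_of_addsmul_bound {f : E → F} (hadd : ∀ x y, f (x + y) = f x + f y)
    (hsmul : ∀ (c : ℂ) x, f (c • x) = c • f x) {c : ℝ} (hb : ∀ x, ‖f x‖ ≤ c * ‖x‖) :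
    Continuous f := by
  have hsub := map_sub_of_addsmul hadd hsmul
  have : LipschitzWith (Real.toNNReal c) f := LipschitzWith.of_dist_le_mul fun x y => by
    rw [dist_eq_norm, dist_eq_norm, ← hsub]
    refine (hb _).trans ?_
    exact mul_le_mul_of_nonneg_right (Real.le_coe_toNNReal c) (norm_nonneg _)
  exact this.continuous

lemma span_closure_elim {g : Set E}
    (hd : closure (Submodule.span ℂ g : Set E) = Set.univ)
    {p : E → Prop} (hc : IsClosed {x | p x})
    (hadd : ∀ a b, p a → p b → p (a + b))
    (hsmul : ∀ (c : ℂ) a, p a → p (c • a))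
    (h0 : p 0)
    (hg : ∀ x ∈ g, p x) : ∀ x, p x := by
  have h1 : (Submodule.span ℂ g : Set E) ⊆ {x | p x} := by
    intro x hx
    exact Submodule.span_induction (fun y hy => hg y hy) h0
      (fun a b _ _ ha hb => hadd a b ha hb) (fun c a _ ha => hsmul c a ha) hx
  intro x
  have hx : x ∈ closure (Submodule.span ℂ g : Set E) := by rw [hd]; trivial
  exact hc.closure_subset_iff.mpr h1 hx

lemma tendsto_sqrt_zero {g : ℕ → ℝ} (hg : Tendsto g atTop (𝓝 0)) :
    Tendsto (fun n => Real.sqrt (g n)) atTop (𝓝 0) := by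
  have h := (Real.continuous_sqrt.tendsto 0).comp hg
  rw [Real.sqrt_zero] at h
  exact h

lemma tendsto_of_norm_sub_le {f : ℕ → E} {a : E} {g : ℕ → ℝ}
    (h : ∀ n, ‖f n - a‖ ≤ g n) (hg : Tendsto g atTop (𝓝 0)) :
    Tendsto f atTop (𝓝 a) := by
  rw [← tendsto_sub_nhds_zero_iff]
  exact squeeze_zero_norm h hg

lemma tendsto_of_sq_le {f : ℕ → E} {a : E} {g : ℕ → ℝ}
    (h : ∀ n, ‖f n - a‖ ^ 2 ≤ g n) (hg : Tendsto g atTop (𝓝 0)) :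
    Tendsto f atTop (𝓝 a) := by
  have hgn : ∀ n, 0 ≤ g n := fun n => le_trans (sq_nonneg _) (h n)
  refine tendsto_of_norm_sub_le (g := fun n => Real.sqrt (g n)) (fun n => ?_)
    (tendsto_sqrt_zero hg)
  refine aux_sq_le_imp (norm_nonneg _) (Real.sqrt_nonneg _) ?_
  rw [Real.sq_sqrt (hgn n)]
  exact h n

lemma isClosed_continuousOn_of_lip {P : Type*} [PseudoMetricSpace P]
    (K : Set P) (Φ : P → E → F)
    (hL : ∀ p ∈ K, ∀ x y : E, ‖Φ p x - Φ p y‖ ≤ ‖x - y‖) :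
    IsClosed {x : E | ContinuousOn (fun p => Φ p x) K} := by
  refine IsSeqClosed.isClosed ?_
  intro u x hu hx
  refine TendstoUniformlyOn.continuousOn (F := fun n p => Φ p (u n)) (p := (atTop : Filter ℕ)) ?_
    (Filter.Frequently.of_forall fun n => hu n)
  rw [Metric.tendstoUniformlyOn_iff]
  intro ε hε
  filter_upwards [Metric.tendsto_nhds.mp hx ε hε] with n hn p hp
  rw [dist_eq_norm]
  calc ‖Φ p x - Φ p (u n)‖ ≤ ‖x - u n‖ := hL p hp x (u n)
    _ < ε := by rw [← dist_eq_norm, dist_comm]; exact hn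

end LinHelpers

variable {A1 B1 : Type u} [NonUnitalCStarAlgebra A1] [NonUnitalCStarAlgebra B1]

lemma Corr.inner_ract_left (W : Corr A1) (x y : W.X) (a : A1) :
    W.inner (W.ract x a) y = star a * W.inner x y := by
  rw [← W.inner_star, W.inner_ract_right, star_mul, W.inner_star]

lemma Corr.ract_norm_le (W : Corr A1) (x : W.X) (a : A1) : ‖W.ract x a‖ ≤ ‖x‖ * ‖a‖ := by
  refine aux_sq_le_imp (norm_nonneg _) (by positivity) ?_
  rw [W.norm_eq, W.inner_ract_right, W.inner_ract_left]
  have h1 : ‖star a * W.inner x x * a‖ ≤ ‖a‖ * ‖W.inner x x‖ * ‖a‖ := by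
    calc ‖star a * W.inner x x * a‖ ≤ ‖star a * W.inner x x‖ * ‖a‖ := norm_mul_le _ _
      _ ≤ ‖star a‖ * ‖W.inner x x‖ * ‖a‖ := by
          exact mul_le_mul_of_nonneg_right (norm_mul_le _ _) (norm_nonneg _)
      _ = ‖a‖ * ‖W.inner x x‖ * ‖a‖ := by rw [norm_star]
  have h2 := W.norm_eq x
  rw [mul_pow]
  calc ‖star a * W.inner x x * a‖ ≤ ‖a‖ * ‖W.inner x x‖ * ‖a‖ := h1
    _ = ‖W.inner x x‖ * ‖a‖ ^ 2 := by ring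
    _ = ‖x‖ ^ 2 * ‖a‖ ^ 2 := by rw [h2]

lemma IsRep.t_norm_le {W : Corr A1} {π : A1 → B1} {t : W.X → B1}
    (h : IsRep W π t) (x : W.X) : ‖t x‖ ≤ ‖x‖ := by
  have h1 : ‖t x‖ * ‖t x‖ = ‖star (t x) * t x‖ := CStarRing.norm_star_mul_self.symm
  rw [h.inner x x] at h1
  have h2 : ‖π (W.inner x x)‖ ≤ ‖W.inner x x‖ := h.hom.norm_le _
  have h3 := W.norm_eq x
  nlinarith [norm_nonneg (t x), norm_nonneg x]

lemma IsRep.t_continuous {W : Corr A1} {π : A1 → B1} {t : W.X → B1}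
    (h : IsRep W π t) : Continuous t := by
  refine continuous_of_addsmul_bound h.t_add h.t_smul (c := 1) fun x => ?_
  rw [one_mul]; exact h.t_norm_le x

lemma MixedMod.norm_sq_le {W : Corr A1} {O : Type u} [NonUnitalCStarAlgebra O]
    {πA : A1 → O} {Z : Corr O} {m : W.X → O → Z.X}
    (h : MixedMod W O πA Z m) (x : W.X) (S : O) :
    ‖m x S‖ ^ 2 ≤ ‖S‖ * ‖πA (W.inner x x) * S‖ := by
  rw [Z.norm_eq, h.inner x S x S]
  calc ‖star S * (πA (W.inner x x) * S)‖ ≤ ‖star S‖ * ‖πA (W.inner x x) * S‖ := norm_mul_le _ _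
    _ = ‖S‖ * ‖πA (W.inner x x) * S‖ := by rw [norm_star]

lemma MixedMod.norm_le {W : Corr A1} {O : Type u} [NonUnitalCStarAlgebra O]
    {πA : A1 → O} {Z : Corr O} {m : W.X → O → Z.X}
    (h : MixedMod W O πA Z m) (hπ : ∀ a, ‖πA a‖ ≤ ‖a‖) (x : W.X) (S : O) :
    ‖m x S‖ ≤ Real.sqrt ‖W.inner x x‖ * ‖S‖ := by
  refine aux_sq_le_imp (norm_nonneg _) (by positivity) ?_
  refine (h.norm_sq_le x S).trans ?_
  have h1 : ‖πA (W.inner x x) * S‖ ≤ ‖W.inner x x‖ * ‖S‖ :=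
    (norm_mul_le _ _).trans (mul_le_mul_of_nonneg_right (hπ _) (norm_nonneg _))
  have h2 := Real.sq_sqrt (norm_nonneg (W.inner x x))
  have h3 := Real.sqrt_nonneg ‖W.inner x x‖
  rw [mul_pow]
  nlinarith [norm_nonneg S, norm_nonneg (W.inner x x)]

lemma MixedMod.continuous_right {W : Corr A1} {O : Type u} [NonUnitalCStarAlgebra O]
    {πA : A1 → O} {Z : Corr O} {m : W.X → O → Z.X}
    (h : MixedMod W O πA Z m) (hπ : ∀ a, ‖πA a‖ ≤ ‖a‖) (x : W.X) :
    Continuous (fun S => m x S) :=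
  continuous_of_addsmul_bound (h.add_right x) (fun c S => h.smul_right c x S)
    (h.norm_le hπ x)

/-- pointwise strong continuity of the gauge action on a Cuntz–Pimsner algebra -/
lemma gauge_continuousOn {W : Corr A1} (C : CPAlg W) (γ : ℂ → C.O → C.O)
    (hγ : IsGaugeAut C γ) (b : C.O) :
    ContinuousOn (fun z => γ z b) {z : ℂ | ‖z‖ = 1} := by
  have hlip : ∀ z ∈ {z : ℂ | ‖z‖ = 1}, ∀ x y : C.O, ‖γ z x - γ z y‖ ≤ ‖x - y‖ :=
    fun z hz x y => (hγ z hz).1.norm_sub_le x y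
  refine C.gen {b | ContinuousOn (fun z => γ z b) {z : ℂ | ‖z‖ = 1}} ?_ ?_ ?_ ?_ ?_ ?_ ?_ b
  · exact isClosed_continuousOn_of_lip _ (fun z b => γ z b) hlip
  · intro a
    exact continuousOn_const.congr fun z hz => (hγ z hz).2.2.2 a
  · intro x
    exact ((continuous_id.smul continuous_const).continuousOn).congr
      fun z hz => (hγ z hz).2.2.1 x
  · intro p q hp hq
    exact (ContinuousOn.add hp hq).congr fun z hz => (hγ z hz).1.map_add p q
  · intro p q hp hq
    exact (ContinuousOn.mul hp hq).congr fun z hz => (hγ z hz).1.map_mul p q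
  · intro c p hp
    exact (hp.const_smul c).congr fun z hz => (hγ z hz).1.map_smul c p
  · intro p hp
    exact hp.star.congr fun z hz => (hγ z hz).1.map_star p

end AuxHelpers


/-- In the `ℕ²` setting, let `τ¹` be the `𝕋`-action on
`𝒪(ℰY₂)` induced by the correspondence automorphisms `(γ_z, 1⊗γ_z)` of
`ℰY₂`, and `τ²` the one induced by `(1, β_z)`, `β_z(y⊗S) = z(y⊗S)`.  Then
`ρ_{(z,w)} = τ²_w τ¹_z` defines a strongly continuous action of `𝕋²` on
`𝒪(ℰY₂)` (the actions commute) with `ρ(σ₁ y) = z σ₁ y` and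
`ρ(σ₂ y) = w σ₂ y`; hence `ρ` is compatible with the gauge action of `𝕋²`
on `𝒪(X)` under the representation `ψ`. -/
theorem torus_action_on_CP_of_EY2
    {A : Type u} [NonUnitalCStarAlgebra A]
    (G : GenSys A 2) (Xs : PSys A 2) (gen : Generates G Xs)
    (C1 : CPAlg (G.Y 0))
    (Z : Corr C1.O) (mm : (G.Y 1).X → C1.O → Z.X)
    (hZ : ECorr G 0 1 C1 Z mm)
    (C2 : CPAlg Z)
    (γ : ℂ → C1.O → C1.O) (hγ : IsGaugeAut C1 γ)
    (σ2 : (G.Y 1).X → C2.O)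
    (hσ2 : ∀ x ξ, (∀ S, Z.ract ξ S = mm x S) → σ2 x = C2.t ξ)
    (ψ : PSRep Xs C2.O) (hψcov : PSCPCov ψ)
    (hψ0 : ψ.π = fun a => C2.π (C1.π a))
    (hψ1 : ∀ x, ψ.ψ (egen 0) ((gen.ι 0).toFun x) = C2.π (C1.t x))
    (hψ2 : ∀ y, ψ.ψ (egen 1) ((gen.ι 1).toFun y) = σ2 y)
    -- `τ¹` is induced by the automorphisms `(γ_z, 1 ⊗ γ_z)` of `ℰY₂`:
    (τ1 : ℂ → C2.O → C2.O)
    (hτ1 : ∀ z : ℂ, ‖z‖ = 1 →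
      IsStarHom (τ1 z) ∧ Function.Bijective (τ1 z) ∧
        (∀ T, τ1 z (C2.π T) = C2.π (γ z T)) ∧
        ∀ y S, τ1 z (C2.t (mm y S)) = C2.t (mm y (γ z S)))
    -- `τ²` is induced by the automorphisms `(1_{𝒪(Y₁)}, β_w)` of `ℰY₂`:
    (τ2 : ℂ → C2.O → C2.O)
    (hτ2 : ∀ w : ℂ, ‖w‖ = 1 →
      IsStarHom (τ2 w) ∧ Function.Bijective (τ2 w) ∧
        (∀ T, τ2 w (C2.π T) = C2.π T) ∧
        ∀ ζ, τ2 w (C2.t ζ) = w • C2.t ζ) :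
    -- the actions commute, so `ρ_{(z,w)} = τ²_w τ¹_z` is a `𝕋²`-action:
    (∀ z w : ℂ, ‖z‖ = 1 → ‖w‖ = 1 →
      ∀ b, τ1 z (τ2 w b) = τ2 w (τ1 z b)) ∧
    -- strong continuity of `ρ`:
    (∀ b : C2.O, ContinuousOn (fun p : ℂ × ℂ => τ2 p.2 (τ1 p.1 b))
      {p | ‖p.1‖ = 1 ∧ ‖p.2‖ = 1}) ∧
    -- `ρ_{(z,w)} σ₁(y₁) = z σ₁(y₁)` and `ρ_{(z,w)} σ₂(y₂) = w σ₂(y₂)`: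
    (∀ z w : ℂ, ‖z‖ = 1 → ‖w‖ = 1 →
      ∀ y1, τ2 w (τ1 z (C2.π (C1.t y1))) = z • C2.π (C1.t y1)) ∧
    (∀ z w : ℂ, ‖z‖ = 1 → ‖w‖ = 1 →
      ∀ y2, τ2 w (τ1 z (σ2 y2)) = w • σ2 y2) ∧
    -- compatibility with the gauge action on `𝒪(X)` under `ψ`:
    ∀ z w : ℂ, ‖z‖ = 1 → ‖w‖ = 1 →
      ∀ s x, τ2 w (τ1 z (ψ.ψ s x)) = (z ^ (s 0) * w ^ (s 1)) • ψ.ψ s x := by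
    -- unpack the `ECorr` hypothesis
  have hZ' : ECorrData (G.Y 0) (G.Y 1) (G.T 0 1) (G.tmul 0 1) (G.T 1 0) (G.tmul 1 0)
      ((G.θ 0 1).toFun) C1 Z mm := hZ
  have hmod := hZ'.mod
  -- basic star-homomorphism facts
  have hC1π : IsStarHom C1.π := C1.isRep.hom
  have hC2π : IsStarHom C2.π := C2.isRep.hom
  have hC2πc : Continuous C2.π := hC2π.continuous
  -- `C2.t` is linear and 1-Lipschitz
  have ht2add := C2.isRep.t_add
  have ht2smul := C2.isRep.t_smul
  have ht2cont : Continuous C2.t := C2.isRep.t_continuous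
  have ht2zero : C2.t 0 = 0 := map_zero_of_addsmul ht2smul
  -- `mm` facts
  have hmmsub : ∀ (y : (G.Y 1).X) (S S' : C1.O), mm y S - mm y S' = mm y (S - S') :=
    fun y S S' =>
      (map_sub_of_addsmul (hmod.add_right y) (fun c S => hmod.smul_right c y S) S S').symm
  have hmmcont : ∀ y : (G.Y 1).X, Continuous (fun S => mm y S) :=
    fun y => hmod.continuous_right (fun a => hC1π.norm_le a) y
  -- the vanishing sequence δ
  set δ : ℕ → ℝ := fun n => Real.sqrt (((n : ℝ) + 1)⁻¹) with hδdef
  have hδnn : ∀ n, 0 ≤ δ n := fun n => Real.sqrt_nonneg _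
  have hδ0 : Tendsto δ atTop (𝓝 0) := by
    refine tendsto_sqrt_zero ?_
    have := tendsto_one_div_add_atTop_nhds_zero_nat (𝕜 := ℝ)
    simpa [one_div] using this
  have hδanti : ∀ N n : ℕ, N ≤ n → δ n ≤ δ N := by
    intro N n h
    refine Real.sqrt_le_sqrt ?_
    have h1 : ((N : ℝ) + 1) ≤ ((n : ℝ) + 1) := by
      have : (N : ℝ) ≤ (n : ℝ) := Nat.cast_le.mpr h
      linarith
    exact inv_anti₀ (by positivity) h1
  -- ### Part C : the two laws for σ2
  have hσ2key : ∀ y2 : (G.Y 1).X,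
      (∀ z : ℂ, ‖z‖ = 1 → τ1 z (σ2 y2) = σ2 y2) ∧
      (∀ w : ℂ, ‖w‖ = 1 → τ2 w (σ2 y2) = w • σ2 y2) := by
    intro y2
    have hbsa : IsSelfAdjoint (C1.π ((G.Y 1).inner y2 y2)) := by
      rw [IsSelfAdjoint, ← hC1π.map_star, (G.Y 1).inner_star]
    set b : C1.O := C1.π ((G.Y 1).inner y2 y2) with hbdef
    obtain ⟨e, hene, hben⟩ := exists_left_approx b hbsa
    have hbenδ : ∀ n, ‖b * e n - b‖ ≤ δ n := hben
    have hmmsq : ∀ S, ‖mm y2 S‖ ^ 2 ≤ ‖S‖ * ‖b * S‖ := fun S => hmod.norm_sq_le y2 S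
    set u : ℕ → Z.X := fun n => mm y2 (e n) with hu
    -- the b-multiplication estimate
    have hbest : ∀ n m : ℕ, ‖b * (e n - e m)‖ ≤ δ n + δ m := by
      intro n m
      have h1 : b * (e n - e m) = (b * e n - b) - (b * e m - b) := by
        rw [mul_sub]; abel
      rw [h1]
      exact (norm_sub_le _ _).trans (add_le_add (hbenδ n) (hbenδ m))
    have henm : ∀ n m : ℕ, ‖e n - e m‖ ≤ 2 :=
      fun n m => (norm_sub_le _ _).trans (by linarith [hene n, hene m])
    have hub : ∀ n m N : ℕ, N ≤ n → N ≤ m → dist (u n) (u m) ≤ Real.sqrt (4 * δ N) := by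
      intro n m N hn hm
      rw [dist_eq_norm]
      refine aux_sq_le_imp (norm_nonneg _) (Real.sqrt_nonneg _) ?_
      rw [Real.sq_sqrt (by positivity : (0:ℝ) ≤ 4 * δ N)]
      rw [hmmsub]
      refine (hmmsq _).trans ?_
      have h4 : ‖b * (e n - e m)‖ ≤ 2 * δ N := by
        refine (hbest n m).trans ?_
        have := hδanti N n hn
        have := hδanti N m hm
        linarith
      refine (mul_le_mul (henm n m) h4 (norm_nonneg _) (by norm_num)).trans ?_
      linarith [hδnn N]
    have hcauchy : CauchySeq u := by
      refine cauchySeq_of_le_tendsto_0 (fun N => Real.sqrt (4 * δ N)) hub ?_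
      refine tendsto_sqrt_zero ?_
      have h := hδ0.const_mul (4:ℝ)
      rw [mul_zero] at h
      exact h
    obtain ⟨ξ, hξ⟩ := cauchySeq_tendsto_of_complete hcauchy
    -- `ξ` absorbs: ract ξ S = mm y2 S
    have hractc : ∀ S : C1.O, Continuous (fun ζ : Z.X => Z.ract ζ S) := fun S => by
      refine continuous_of_addsmul_bound (fun ζ ζ' => Z.ract_add_left ζ ζ' S)
        (fun c ζ => Z.ract_smul c ζ S) (c := ‖S‖) fun ζ => ?_
      rw [mul_comm]; exact Z.ract_norm_le ζ S
    have hξract : ∀ S, Z.ract ξ S = mm y2 S := by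
      intro S
      have h1 : Tendsto (fun n => Z.ract (u n) S) atTop (𝓝 (Z.ract ξ S)) :=
        (((hractc S).tendsto ξ).comp hξ)
      have h2 : ∀ n, Z.ract (u n) S = mm y2 (e n * S) := fun n => hmod.ract y2 (e n) S
      have h3 : Tendsto (fun n => mm y2 (e n * S)) atTop (𝓝 (mm y2 S)) := by
        refine tendsto_of_sq_le (g := fun n => (2 * ‖S‖ * ‖S‖) * δ n) (fun n => ?_) ?_
        · rw [hmmsub]
          refine (hmmsq _).trans ?_
          have h4 : ‖e n * S - S‖ ≤ 2 * ‖S‖ := by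
            calc ‖e n * S - S‖ ≤ ‖e n * S‖ + ‖S‖ := norm_sub_le _ _
              _ ≤ ‖e n‖ * ‖S‖ + ‖S‖ := by
                  exact add_le_add (norm_mul_le _ _) le_rfl
              _ ≤ 2 * ‖S‖ := by nlinarith [hene n, norm_nonneg S]
          have h5 : ‖b * (e n * S - S)‖ ≤ δ n * ‖S‖ := by
            have heq : b * (e n * S - S) = (b * e n - b) * S := by
              rw [mul_sub, sub_mul, mul_assoc]
            rw [heq]
            exact (norm_mul_le _ _).trans
              (mul_le_mul_of_nonneg_right (hbenδ n) (norm_nonneg _))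
          refine (mul_le_mul h4 h5 (norm_nonneg _) (by positivity)).trans (le_of_eq ?_)
          beta_reduce
          ring
        · have h := hδ0.const_mul (2 * ‖S‖ * ‖S‖)
          rw [mul_zero] at h
          exact h
      refine tendsto_nhds_unique ?_ h3
      simpa only [h2] using h1
    have hσξ : σ2 y2 = C2.t ξ := hσ2 y2 ξ hξract
    refine ⟨?_, fun w hw => by rw [hσξ]; exact (hτ2 w hw).2.2.2 ξ⟩
    intro z hz
    obtain ⟨h1s, h1b, h1π, h1t⟩ := hτ1 z hz
    obtain ⟨hγs, hγb, hγt, hγπ⟩ := hγ z hz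
    have hγbfix : γ z b = b := hγπ _
    -- mm y2 (γ z (e n)) → ξ
    have hd : Tendsto (fun n => mm y2 (γ z (e n))) atTop (𝓝 ξ) := by
      have hdiff : Tendsto (fun n => mm y2 (γ z (e n)) - u n) atTop (𝓝 0) := by
        refine tendsto_of_sq_le (g := fun n => 4 * δ n) (fun n => ?_) ?_
        · rw [sub_zero, hmmsub]
          refine (hmmsq _).trans ?_
          have h4 : ‖γ z (e n) - e n‖ ≤ 2 :=
            (norm_sub_le _ _).trans
              (by linarith [(hγs.norm_le (e n)).trans (hene n), hene n])
          have h5 : ‖b * (γ z (e n) - e n)‖ ≤ 2 * δ n := by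
            have heq : b * (γ z (e n) - e n) = (γ z (b * e n) - γ z b) + (b - b * e n) := by
              rw [hγs.map_mul, hγbfix, mul_sub]; abel
            rw [heq]
            refine (norm_add_le _ _).trans ?_
            have h6 : ‖γ z (b * e n) - γ z b‖ ≤ ‖b * e n - b‖ := hγs.norm_sub_le _ _
            have h7 : ‖b - b * e n‖ = ‖b * e n - b‖ := norm_sub_rev _ _
            have := hbenδ n
            linarith
          refine (mul_le_mul h4 h5 (norm_nonneg _) (by norm_num)).trans ?_
          beta_reduce
          linarith [hδnn n]
        · have h := hδ0.const_mul (4:ℝ)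
          rw [mul_zero] at h
          exact h
      have h := hξ.add hdiff
      rw [add_zero] at h
      refine h.congr fun n => ?_
      abel
    have hlim1 : Tendsto (fun n => τ1 z (C2.t (u n))) atTop (𝓝 (τ1 z (C2.t ξ))) :=
      ((h1s.continuous.comp ht2cont).tendsto ξ).comp hξ
    have heqn : ∀ n, τ1 z (C2.t (u n)) = C2.t (mm y2 (γ z (e n))) := fun n => h1t y2 (e n)
    have hlim2 : Tendsto (fun n => C2.t (mm y2 (γ z (e n)))) atTop (𝓝 (C2.t ξ)) :=
      (ht2cont.tendsto ξ).comp hd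
    rw [hσξ]
    refine tendsto_nhds_unique ?_ hlim2
    simpa only [heqn] using hlim1
  -- ### Part A : the actions commute
  have hcommute : ∀ z w : ℂ, ‖z‖ = 1 → ‖w‖ = 1 → ∀ b, τ1 z (τ2 w b) = τ2 w (τ1 z b) := by
    intro z w hz hw
    obtain ⟨h1s, h1b, h1π, h1t⟩ := hτ1 z hz
    obtain ⟨h2s, h2b, h2π, h2t⟩ := hτ2 w hw
    refine C2.gen {b | τ1 z (τ2 w b) = τ2 w (τ1 z b)} ?_ ?_ ?_ ?_ ?_ ?_ ?_
    · exact isClosed_eq (h1s.continuous.comp h2s.continuous)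
        (h2s.continuous.comp h1s.continuous)
    · intro T
      show τ1 z (τ2 w (C2.π T)) = τ2 w (τ1 z (C2.π T))
      rw [h2π, h1π, h2π]
    · intro ζ
      refine span_closure_elim hmod.dense
        (p := fun ζ => τ1 z (τ2 w (C2.t ζ)) = τ2 w (τ1 z (C2.t ζ))) ?_ ?_ ?_ ?_ ?_ ζ
      · exact isClosed_eq ((h1s.continuous.comp h2s.continuous).comp ht2cont)
          ((h2s.continuous.comp h1s.continuous).comp ht2cont)
      · intro a c ha hc
        beta_reduce
        rw [ht2add, h1s.map_add, h2s.map_add, h1s.map_add, h2s.map_add, ha, hc]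
      · intro c a ha
        beta_reduce
        rw [ht2smul, h1s.map_smul, h2s.map_smul, h1s.map_smul, h2s.map_smul, ha]
      · show τ1 z (τ2 w (C2.t 0)) = τ2 w (τ1 z (C2.t 0))
        simp only [ht2zero, h1s.map_zero, h2s.map_zero]
      · rintro ζ ⟨y, S, rfl⟩
        show τ1 z (τ2 w (C2.t (mm y S))) = τ2 w (τ1 z (C2.t (mm y S)))
        simp only [h2t, h1s.map_smul, h1t]
    · intro p q hp hq
      show τ1 z (τ2 w (p + q)) = τ2 w (τ1 z (p + q))
      rw [h2s.map_add, h1s.map_add, h1s.map_add, h2s.map_add, hp, hq]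
    · intro p q hp hq
      show τ1 z (τ2 w (p * q)) = τ2 w (τ1 z (p * q))
      rw [h2s.map_mul, h1s.map_mul, h1s.map_mul, h2s.map_mul, hp, hq]
    · intro c p hp
      show τ1 z (τ2 w (c • p)) = τ2 w (τ1 z (c • p))
      rw [h2s.map_smul, h1s.map_smul, h1s.map_smul, h2s.map_smul, hp]
    · intro p hp
      show τ1 z (τ2 w (star p)) = τ2 w (τ1 z (star p))
      rw [h2s.map_star, h1s.map_star, h1s.map_star, h2s.map_star, hp]
  -- ### Part B : law for σ1
  have hσ1law : ∀ z w : ℂ, ‖z‖ = 1 → ‖w‖ = 1 →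
      ∀ y1, τ2 w (τ1 z (C2.π (C1.t y1))) = z • C2.π (C1.t y1) := by
    intro z w hz hw y1
    rw [(hτ1 z hz).2.2.1, (hγ z hz).2.2.1, hC2π.map_smul, (hτ2 w hw).1.map_smul,
      (hτ2 w hw).2.2.1]
  -- ### Part D : strong continuity
  have hγcont : ∀ T : C1.O, ContinuousOn (fun z => γ z T) {z : ℂ | ‖z‖ = 1} :=
    gauge_continuousOn C1 γ hγ
  have hcont : ∀ b : C2.O, ContinuousOn (fun p : ℂ × ℂ => τ2 p.2 (τ1 p.1 b))
      {p : ℂ × ℂ | ‖p.1‖ = 1 ∧ ‖p.2‖ = 1} := by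
    set K : Set (ℂ × ℂ) := {p : ℂ × ℂ | ‖p.1‖ = 1 ∧ ‖p.2‖ = 1} with hK
    have hKmem : ∀ p ∈ K, ‖p.1‖ = 1 ∧ ‖p.2‖ = 1 := fun p hp => hp
    have hρlip : ∀ p ∈ K, ∀ x y : C2.O, ‖τ2 p.2 (τ1 p.1 x) - τ2 p.2 (τ1 p.1 y)‖ ≤ ‖x - y‖ :=
      fun p hp x y =>
        ((hτ2 p.2 (hKmem p hp).2).1.norm_sub_le _ _).trans
          ((hτ1 p.1 (hKmem p hp).1).1.norm_sub_le x y)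
    have hγK : ∀ T : C1.O, ContinuousOn (fun p : ℂ × ℂ => γ p.1 T) K := fun T =>
      (hγcont T).comp continuous_fst.continuousOn (fun p hp => (hKmem p hp).1)
    refine C2.gen {b | ContinuousOn (fun p : ℂ × ℂ => τ2 p.2 (τ1 p.1 b)) K}
      ?_ ?_ ?_ ?_ ?_ ?_ ?_
    · exact isClosed_continuousOn_of_lip K (fun p b => τ2 p.2 (τ1 p.1 b)) hρlip
    · intro T
      refine ContinuousOn.congr (hC2πc.comp_continuousOn (hγK T)) fun p hp => ?_
      show τ2 p.2 (τ1 p.1 (C2.π T)) = C2.π (γ p.1 T)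
      rw [(hτ1 p.1 (hKmem p hp).1).2.2.1 T, (hτ2 p.2 (hKmem p hp).2).2.2.1]
    · intro ζ
      refine span_closure_elim hmod.dense
        (p := fun ζ => ContinuousOn (fun p : ℂ × ℂ => τ2 p.2 (τ1 p.1 (C2.t ζ))) K)
        ?_ ?_ ?_ ?_ ?_ ζ
      · exact isClosed_continuousOn_of_lip K (fun p ζ => τ2 p.2 (τ1 p.1 (C2.t ζ)))
          (fun p hp ζ ζ' => by
            refine (hρlip p hp _ _).trans ?_
            rw [← map_sub_of_addsmul ht2add ht2smul]
            exact C2.isRep.t_norm_le _)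
      · intro a c ha hc
        refine (ContinuousOn.add ha hc).congr fun p hp => ?_
        show τ2 p.2 (τ1 p.1 (C2.t (a + c))) = _
        rw [ht2add, (hτ1 p.1 (hKmem p hp).1).1.map_add, (hτ2 p.2 (hKmem p hp).2).1.map_add]
        rfl
      · intro c a ha
        refine (ha.const_smul c).congr fun p hp => ?_
        show τ2 p.2 (τ1 p.1 (C2.t (c • a))) = _
        rw [ht2smul, (hτ1 p.1 (hKmem p hp).1).1.map_smul, (hτ2 p.2 (hKmem p hp).2).1.map_smul]
        rfl
      · refine (continuousOn_const (c := (0 : C2.O))).congr fun p hp => ?_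
        show τ2 p.2 (τ1 p.1 (C2.t 0)) = 0
        rw [ht2zero, (hτ1 p.1 (hKmem p hp).1).1.map_zero, (hτ2 p.2 (hKmem p hp).2).1.map_zero]
      · rintro ζ ⟨y, S, rfl⟩
        refine ContinuousOn.congr (f := fun p : ℂ × ℂ => p.2 • C2.t (mm y (γ p.1 S)))
          ?_ fun p hp => ?_
        · exact ContinuousOn.smul continuous_snd.continuousOn
            ((ht2cont.comp (hmmcont y)).comp_continuousOn (hγK S))
        · show τ2 p.2 (τ1 p.1 (C2.t (mm y S))) = p.2 • C2.t (mm y (γ p.1 S))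
          rw [(hτ1 p.1 (hKmem p hp).1).2.2.2 y S, (hτ2 p.2 (hKmem p hp).2).2.2.2]
    · intro p q hp hq
      refine (ContinuousOn.add hp hq).congr fun r hr => ?_
      show τ2 r.2 (τ1 r.1 (p + q)) = _
      rw [(hτ1 r.1 (hKmem r hr).1).1.map_add, (hτ2 r.2 (hKmem r hr).2).1.map_add]
      rfl
    · intro p q hp hq
      refine (ContinuousOn.mul hp hq).congr fun r hr => ?_
      show τ2 r.2 (τ1 r.1 (p * q)) = _
      rw [(hτ1 r.1 (hKmem r hr).1).1.map_mul, (hτ2 r.2 (hKmem r hr).2).1.map_mul]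
      rfl
    · intro c p hp
      refine (hp.const_smul c).congr fun r hr => ?_
      show τ2 r.2 (τ1 r.1 (c • p)) = _
      rw [(hτ1 r.1 (hKmem r hr).1).1.map_smul, (hτ2 r.2 (hKmem r hr).2).1.map_smul]
      rfl
    · intro p hp
      refine hp.star.congr fun r hr => ?_
      show τ2 r.2 (τ1 r.1 (star p)) = _
      rw [(hτ1 r.1 (hKmem r hr).1).1.map_star, (hτ2 r.2 (hKmem r hr).2).1.map_star]
  -- ### Part E : compatibility with the gauge action on 𝒪(X)
  have hψcontin : ∀ s, Continuous (ψ.ψ s) := fun s => (ψ.isRep s).t_continuous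
  have hρ0 : ∀ (z w : ℂ), ‖z‖ = 1 → ‖w‖ = 1 → ∀ v : (Xs.fib (egen (0 : Fin 2))).X,
      τ2 w (τ1 z (ψ.ψ (egen (0 : Fin 2)) v)) = z • ψ.ψ (egen (0 : Fin 2)) v := by
    intro z w hz hw v
    obtain ⟨x0, rfl⟩ : ∃ x0, (gen.ι 0).toFun x0 = v :=
      ⟨(gen.ι 0).invFun v, (gen.ι 0).right_inv v⟩
    rw [hψ1]
    exact hσ1law z w hz hw x0
  have hρ1 : ∀ (z w : ℂ), ‖z‖ = 1 → ‖w‖ = 1 → ∀ v : (Xs.fib (egen (1 : Fin 2))).X,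
      τ2 w (τ1 z (ψ.ψ (egen (1 : Fin 2)) v)) = w • ψ.ψ (egen (1 : Fin 2)) v := by
    intro z w hz hw v
    obtain ⟨y0, rfl⟩ : ∃ y0, (gen.ι 1).toFun y0 = v :=
      ⟨(gen.ι 1).invFun v, (gen.ι 1).right_inv v⟩
    rw [hψ2]
    rw [(hσ2key y0).1 z hz]
    exact (hσ2key y0).2 w hw
  have hgauge : ∀ z w : ℂ, ‖z‖ = 1 → ‖w‖ = 1 →
      ∀ s x, τ2 w (τ1 z (ψ.ψ s x)) = (z ^ (s 0) * w ^ (s 1)) • ψ.ψ s x := by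
    intro z w hz hw
    obtain ⟨h1s, h1b, h1π, h1t⟩ := hτ1 z hz
    obtain ⟨h2s, h2b, h2π, h2t⟩ := hτ2 w hw
    have hρc : Continuous (fun b => τ2 w (τ1 z b)) := h2s.continuous.comp h1s.continuous
    suffices h : ∀ (n : ℕ) (s : Fin 2 → ℕ), s 0 + s 1 = n →
        ∀ x, τ2 w (τ1 z (ψ.ψ s x)) = (z ^ (s 0) * w ^ (s 1)) • ψ.ψ s x from
      fun s x => h (s 0 + s 1) s rfl x
    intro n
    induction n with
    | zero =>
      intro s hs
      obtain rfl : s = 0 := by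
        funext j
        fin_cases j <;> simp <;> omega
      intro x
      obtain ⟨a, rfl⟩ := Xs.unit_bij.2 x
      rw [ψ.ψ_zero a, hψ0]
      show τ2 w (τ1 z (C2.π (C1.π a))) = _ • (fun a => C2.π (C1.π a)) a
      rw [h1π, (hγ z hz).2.2.2, h2π]
      simp
    | succ n ih =>
      intro s hs
      by_cases hpos : 0 < s 0
      · obtain ⟨s', rfl⟩ : ∃ s' : Fin 2 → ℕ, s = s' + egen (0 : Fin 2) := by
          refine ⟨fun j => if j = 0 then s 0 - 1 else s j, ?_⟩
          funext j
          fin_cases j <;> simp [egen, Pi.single_apply] <;> omega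
        have hs' : s' 0 + s' 1 = n := by
          simp only [Pi.add_apply, egen, Pi.single_apply] at hs
          simp at hs
          omega
        have he0 : (s' + egen (0 : Fin 2)) 0 = s' 0 + 1 := by
          simp [egen, Pi.single_apply]
        have he1 : (s' + egen (0 : Fin 2)) 1 = s' 1 := by
          simp [egen, Pi.single_apply]
        refine span_closure_elim (Xs.isTensor s' (egen (0 : Fin 2))).dense
          (p := fun x => τ2 w (τ1 z (ψ.ψ (s' + egen (0 : Fin 2)) x)) =
            (z ^ ((s' + egen (0 : Fin 2)) 0) * w ^ ((s' + egen (0 : Fin 2)) 1)) • ψ.ψ (s' + egen (0 : Fin 2)) x)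
          ?_ ?_ ?_ ?_ ?_
        · exact isClosed_eq (hρc.comp (hψcontin _)) ((hψcontin _).const_smul _)
        · intro a c ha hc
          beta_reduce
          rw [(ψ.isRep _).t_add, h1s.map_add, h2s.map_add, ha, hc, smul_add]
        · intro c a ha
          beta_reduce
          rw [(ψ.isRep _).t_smul, h1s.map_smul, h2s.map_smul, ha, smul_smul, smul_smul,
            mul_comm]
        · beta_reduce
          rw [map_zero_of_addsmul (ψ.isRep _).t_smul, h1s.map_zero, h2s.map_zero, smul_zero]
        · rintro x ⟨x', y', rfl⟩
          beta_reduce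
          rw [← ψ.mul s' (egen (0 : Fin 2)) x' y', h1s.map_mul, h2s.map_mul, ih s' hs' x',
            hρ0 z w hz hw y', smul_mul_smul_comm, he0, he1, pow_succ]
          ring_nf
      · have hpos1 : 0 < s 1 := by omega
        obtain ⟨s', rfl⟩ : ∃ s' : Fin 2 → ℕ, s = s' + egen (1 : Fin 2) := by
          refine ⟨fun j => if j = 1 then s 1 - 1 else s j, ?_⟩
          funext j
          fin_cases j <;> simp [egen, Pi.single_apply] <;> omega
        have hs' : s' 0 + s' 1 = n := by
          simp only [Pi.add_apply, egen, Pi.single_apply] at hs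
          simp at hs
          omega
        have he0 : (s' + egen (1 : Fin 2)) 0 = s' 0 := by
          simp [egen, Pi.single_apply]
        have he1 : (s' + egen (1 : Fin 2)) 1 = s' 1 + 1 := by
          simp [egen, Pi.single_apply]
        refine span_closure_elim (Xs.isTensor s' (egen (1 : Fin 2))).dense
          (p := fun x => τ2 w (τ1 z (ψ.ψ (s' + egen (1 : Fin 2)) x)) =
            (z ^ ((s' + egen (1 : Fin 2)) 0) * w ^ ((s' + egen (1 : Fin 2)) 1)) • ψ.ψ (s' + egen (1 : Fin 2)) x)
          ?_ ?_ ?_ ?_ ?_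
        · exact isClosed_eq (hρc.comp (hψcontin _)) ((hψcontin _).const_smul _)
        · intro a c ha hc
          beta_reduce
          rw [(ψ.isRep _).t_add, h1s.map_add, h2s.map_add, ha, hc, smul_add]
        · intro c a ha
          beta_reduce
          rw [(ψ.isRep _).t_smul, h1s.map_smul, h2s.map_smul, ha, smul_smul, smul_smul,
            mul_comm]
        · beta_reduce
          rw [map_zero_of_addsmul (ψ.isRep _).t_smul, h1s.map_zero, h2s.map_zero, smul_zero]
        · rintro x ⟨x', y', rfl⟩
          beta_reduce
          rw [← ψ.mul s' (egen (1 : Fin 2)) x' y', h1s.map_mul, h2s.map_mul, ih s' hs' x',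
            hρ1 z w hz hw y', smul_mul_smul_comm, he0, he1, pow_succ]
          ring_nf
  exact ⟨hcommute, hcont, hσ1law,
    fun z w hz hw y2 => by rw [(hσ2key y2).1 z hz]; exact (hσ2key y2).2 w hw, hgauge⟩
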